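/- Let p ≥ 1 and α_1,…,α_p ∈ [0,1] with α_p > 0, let r = ρ(A), and let Π = u vᵀ with u, v the explicit right and left Perron eigenvectors of the companion matrix A normalized so that Σ_i u_i = 1 and uᵀv = 1. Then e₁ᵀ Π e₁ = r^{p−1}/φ′(r), where e₁ is the first standard basis vector of ℝ^p and φ′ is the derivative of the characteristic polynomial φ of A. -/

import Mathlib

open Matrix Polynomial

noncomputable section

/-- The companion matrix with first row `(α_1, …, α_p)` and subdiagonal entries `1`. -/
def companion (p : ℕ) (α : Fin p → ℝ) : Matrix (Fin p) (Fin p) ℝ :=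
  Matrix.of fun i j => if (i : ℕ) = 0 then α j else if (i : ℕ) = (j : ℕ) + 1 then 1 else 0

/-- `φ(λ) = λ^p − α_1 λ^{p−1} − ⋯ − α_p`, where `α i` (0-indexed) is `α_{i+1}`. -/
def phiPoly (p : ℕ) (α : Fin p → ℝ) : Polynomial ℝ :=
  X ^ p - ∑ k : Fin p, C (α k) * X ^ (p - 1 - (k : ℕ))

/-- The spectral radius of a real matrix: the maximum (supremum) of the moduli of its
complex eigenvalues. -/
def specRad {p : ℕ} (A : Matrix (Fin p) (Fin p) ℝ) : ℝ :=
  sSup {r : ℝ | ∃ z ∈ spectrum ℂ (A.map (Complex.ofReal : ℝ → ℂ)), ‖z‖ = r}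

/-- The right Perron vector (0-based indices). -/
def perronU (p : ℕ) (r : ℝ) : Fin p → ℝ :=
  fun i => r ^ (-(i : ℤ)) / ∑ k : Fin p, r ^ (-(k : ℤ))

/-- The left Perron vector (0-based indices). -/
def perronV (p : ℕ) (α : Fin p → ℝ) (r : ℝ) : Fin p → ℝ :=
  fun i => (∑ k : Fin p, r ^ (-(k : ℤ))) /
      (∑ k : Fin p, ((k : ℕ) + 1 : ℝ) * α k * r ^ (-((k : ℕ) + 1 : ℤ))) *
      ∑ ℓ ∈ Finset.univ.filter (fun ℓ : Fin p => i ≤ ℓ),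
        α ℓ * r ^ ((i : ℤ) - (ℓ : ℤ) - 1)

section Aux

theorem spec_iff_eig' {n : Type*} [Fintype n] [DecidableEq n] (M : Matrix n n ℂ) (z : ℂ) :
    z ∈ spectrum ℂ M ↔ ∃ v ≠ 0, M.mulVec v = z • v := by
  rw [spectrum.mem_iff, Matrix.isUnit_iff_isUnit_det, isUnit_iff_ne_zero, not_ne_iff,
    ← Matrix.exists_mulVec_eq_zero_iff]
  have key : ∀ v, (algebraMap ℂ (Matrix n n ℂ) z - M).mulVec v = z • v - M.mulVec v := by
    intro v
    rw [Matrix.sub_mulVec]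
    congr 1
    ext i
    simp [Matrix.algebraMap_eq_diagonal, Matrix.mulVec_diagonal]
  constructor
  · rintro ⟨v, hv, h⟩
    rw [key, sub_eq_zero] at h
    exact ⟨v, hv, h.symm⟩
  · rintro ⟨v, hv, h⟩
    exact ⟨v, hv, by rw [key, h, sub_self]⟩

theorem companion_mulVec' (p : ℕ) (α : Fin p → ℝ) (v : Fin p → ℂ) (i : Fin p) :
    ((companion p α).map (Complex.ofReal : ℝ → ℂ)).mulVec v i =
      if h : (i : ℕ) = 0 then ∑ j, (α j : ℂ) * v j else v ⟨(i : ℕ) - 1, by omega⟩ := by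
  rw [Matrix.mulVec, dotProduct]
  by_cases h : (i : ℕ) = 0
  · simp [companion, h]
  · rw [dif_neg h]
    have hi1 : (i : ℕ) - 1 < p := by omega
    rw [Finset.sum_eq_single ⟨(i : ℕ) - 1, hi1⟩]
    · have : (i : ℕ) = (i : ℕ) - 1 + 1 := by omega
      simp [companion, h, ← this]
    · intro j _ hj
      simp only [companion, Matrix.map_apply, Matrix.of_apply, if_neg h]
      have : ¬ ((i : ℕ) = (j : ℕ) + 1) := by
        intro h'
        exact hj (Fin.ext (by simp; omega))
      simp [this]
    · simp

theorem companion_spectrum' (p : ℕ) (hp : 0 < p) (α : Fin p → ℝ)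
    (hαp : 0 < α ⟨p - 1, Nat.sub_lt hp one_pos⟩) (z : ℂ) :
    z ∈ spectrum ℂ ((companion p α).map (Complex.ofReal : ℝ → ℂ)) ↔
      z ^ p = ∑ k : Fin p, (α k : ℂ) * z ^ (p - 1 - (k : ℕ)) := by
  rw [spec_iff_eig']
  constructor
  · rintro ⟨v, hv, h⟩
    have hrel : ∀ n (hn : n + 1 < p), v ⟨n, by omega⟩ = z * v ⟨n + 1, hn⟩ := by
      intro n hn
      have := congrFun h ⟨n + 1, hn⟩
      rw [companion_mulVec' p] at this
      simpa using this
    have hz : z ≠ 0 := by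
      intro hz0
      apply hv
      have hsmall : ∀ j : Fin p, (j : ℕ) < p - 1 → v j = 0 := by
        intro j hj
        have := hrel j (by omega)
        rw [hz0, zero_mul] at this
        simpa [Fin.ext_iff] using this
      have hrow0 := congrFun h ⟨0, hp⟩
      rw [companion_mulVec' p] at hrow0
      simp only [dif_pos] at hrow0
      rw [hz0, Pi.smul_apply, smul_eq_mul, zero_mul] at hrow0
      have hlast : v ⟨p - 1, by omega⟩ = 0 := by
        have hsum : ∑ j, (α j : ℂ) * v j = (α ⟨p - 1, by omega⟩ : ℂ) * v ⟨p - 1, by omega⟩ := by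
          rw [Finset.sum_eq_single ⟨p - 1, by omega⟩]
          · intro j _ hj
            have hj' : (j : ℕ) ≠ p - 1 := fun hc => hj (Fin.ext hc)
            have := j.isLt
            rw [hsmall j (by omega), mul_zero]
          · simp
        rw [hsum] at hrow0
        have : (α ⟨p - 1, by omega⟩ : ℂ) ≠ 0 := by exact_mod_cast hαp.ne'
        exact (mul_eq_zero.mp hrow0).resolve_left this
      funext j
      by_cases hj : (j : ℕ) < p - 1
      · exact hsmall j hj
      · have : j = ⟨p - 1, by omega⟩ := by
          apply Fin.ext
          show (j : ℕ) = p - 1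
          have := j.isLt
          omega
        rw [this, hlast]; rfl
    have hpow : ∀ n (hn : n < p), z ^ n * v ⟨n, hn⟩ = v ⟨0, hp⟩ := by
      intro n
      induction n with
      | zero => intro hn; simp
      | succ m ih =>
        intro hn
        rw [pow_succ, mul_assoc, ← hrel m hn]
        exact ih (by omega)
    have hv0 : v ⟨0, hp⟩ ≠ 0 := by
      intro h0
      apply hv
      funext j
      have := hpow j j.isLt
      rw [Fin.eta, h0] at this
      exact (mul_eq_zero.mp this).resolve_left (pow_ne_zero _ hz)
    have hrow0 : ∑ j, (α j : ℂ) * v j = z * v ⟨0, hp⟩ := by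
      have := congrFun h ⟨0, hp⟩
      rw [companion_mulVec' p] at this
      simpa using this
    have key : (∑ k : Fin p, (α k : ℂ) * z ^ (p - 1 - (k : ℕ))) * v ⟨0, hp⟩
        = z ^ p * v ⟨0, hp⟩ := by
      rw [Finset.sum_mul]
      have : ∀ k : Fin p, (α k : ℂ) * z ^ (p - 1 - (k : ℕ)) * v ⟨0, hp⟩
          = z ^ (p - 1) * ((α k : ℂ) * v k) := by
        intro k
        rw [← hpow k k.isLt, Fin.eta]
        have hexp : z ^ (p - 1 - (k : ℕ)) * z ^ (k : ℕ) = z ^ (p - 1) := by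
          rw [← pow_add]; congr 1; omega
        calc (α k : ℂ) * z ^ (p - 1 - (k : ℕ)) * (z ^ (k : ℕ) * v k)
            = z ^ (p - 1 - (k : ℕ)) * z ^ (k : ℕ) * ((α k : ℂ) * v k) := by ring
          _ = z ^ (p - 1) * ((α k : ℂ) * v k) := by rw [hexp]
      rw [Finset.sum_congr rfl fun k _ => this k, ← Finset.mul_sum, hrow0]
      rw [← mul_assoc, ← pow_succ]
      congr 2
      omega
    exact (mul_right_cancel₀ hv0 key).symm
  · intro heq
    refine ⟨fun j => z ^ (p - 1 - (j : ℕ)), ?_, ?_⟩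
    · intro h0
      have := congrFun h0 ⟨p - 1, by omega⟩
      simp at this
    · funext i
      rw [companion_mulVec' p]
      by_cases h : (i : ℕ) = 0
      · rw [dif_pos h]
        rw [← heq]
        simp only [Pi.smul_apply, smul_eq_mul, h]
        rw [← pow_succ']
        congr 1
        omega
      · rw [dif_neg h]
        simp only [Pi.smul_apply, smul_eq_mul, ← pow_succ']
        congr 1
        omega

theorem exists_perron_root' (p : ℕ) (hp : 0 < p) (α : Fin p → ℝ)
    (hα : ∀ i, α i ∈ Set.Icc (0 : ℝ) 1) (hαp : 0 < α ⟨p - 1, Nat.sub_lt hp one_pos⟩) :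
    ∃ r : ℝ, 0 < r ∧ r ^ p = ∑ k : Fin p, α k * r ^ (p - 1 - (k : ℕ)) ∧
      ∀ t : ℝ, 0 ≤ t → t ^ p ≤ ∑ k : Fin p, α k * t ^ (p - 1 - (k : ℕ)) → t ≤ r := by
  set g : ℝ → ℝ := fun t => ∑ k : Fin p, α k * (t ^ ((k : ℕ) + 1))⁻¹ with hg
  set a : ℝ := α ⟨p - 1, by omega⟩ with ha
  have ha0 : 0 < a := hαp
  have ha1 : a ≤ 1 := (hα _).2
  set t₁ : ℝ := min a 1 with ht₁
  have ht₁0 : 0 < t₁ := lt_min ha0 one_pos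
  have ht₁1 : t₁ ≤ 1 := min_le_right _ _
  set b : ℝ := max (p : ℝ) 1 with hb
  have hb1 : (1 : ℝ) ≤ b := le_max_right _ _
  have htb : t₁ ≤ b := ht₁1.trans hb1
  have hkey : ∀ t : ℝ, 0 < t → t ^ p * g t = ∑ k : Fin p, α k * t ^ (p - 1 - (k : ℕ)) := by
    intro t ht
    rw [hg, Finset.mul_sum]
    refine Finset.sum_congr rfl fun k _ => ?_
    have hk := k.isLt
    have hsplit : t ^ p = t ^ (p - 1 - (k : ℕ)) * t ^ ((k : ℕ) + 1) := by
      rw [← pow_add]; congr 1; omega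
    rw [hsplit]
    field_simp
  have hanti : ∀ s t : ℝ, 0 < s → s < t → g t < g s := by
    intro s t hs hst
    rw [hg]
    apply Finset.sum_lt_sum
    · intro k _
      rcases (hα k).1.eq_or_lt with h0 | h0
      · rw [← h0]; simp
      · apply mul_le_mul_of_nonneg_left _ (hα k).1
        apply inv_anti₀ (pow_pos hs _)
        exact pow_le_pow_left₀ hs.le hst.le _
    · refine ⟨⟨p - 1, by omega⟩, Finset.mem_univ _, ?_⟩
      apply mul_lt_mul_of_pos_left _ ha0
      apply inv_strictAnti₀ (pow_pos hs _)
      exact pow_lt_pow_left₀ hst hs.le (by omega)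
  have hg1 : 1 ≤ g t₁ := by
    have hterm : a * (t₁ ^ p)⁻¹ ≤ g t₁ := by
      have h0 := Finset.single_le_sum (f := fun k : Fin p => α k * (t₁ ^ ((k : ℕ) + 1))⁻¹)
        (fun k _ => mul_nonneg (hα k).1 (inv_nonneg.2 (pow_pos ht₁0 _).le))
        (Finset.mem_univ (⟨p - 1, by omega⟩ : Fin p))
      simpa [show p - 1 + 1 = p by omega] using h0
    refine le_trans ?_ hterm
    have h1 : t₁ ^ p ≤ t₁ := by
      calc t₁ ^ p ≤ t₁ ^ 1 := pow_le_pow_of_le_one ht₁0.le ht₁1 hp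
        _ = t₁ := pow_one _
    have h2 : t₁ ≤ a := min_le_left _ _
    have : a⁻¹ ≤ (t₁ ^ p)⁻¹ :=
      inv_anti₀ (pow_pos ht₁0 _) (h1.trans h2)
    calc (1 : ℝ) = a * a⁻¹ := by rw [mul_inv_cancel₀ ha0.ne']
      _ ≤ a * (t₁ ^ p)⁻¹ := mul_le_mul_of_nonneg_left this ha0.le
  have hg2 : g b ≤ 1 := by
    have hb0 : 0 < b := lt_of_lt_of_le one_pos hb1
    have : ∀ k : Fin p, α k * (b ^ ((k : ℕ) + 1))⁻¹ ≤ b⁻¹ := by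
      intro k
      have h1 : b ≤ b ^ ((k : ℕ) + 1) := le_self_pow₀ hb1 (by omega)
      have h2 : (b ^ ((k : ℕ) + 1))⁻¹ ≤ b⁻¹ := inv_anti₀ hb0 h1
      calc α k * (b ^ ((k : ℕ) + 1))⁻¹ ≤ 1 * (b ^ ((k : ℕ) + 1))⁻¹ :=
            mul_le_mul_of_nonneg_right (hα k).2 (inv_nonneg.2 (pow_pos hb0 _).le)
        _ = (b ^ ((k : ℕ) + 1))⁻¹ := one_mul _
        _ ≤ b⁻¹ := h2
    calc g b ≤ ∑ _k : Fin p, b⁻¹ := Finset.sum_le_sum fun k _ => this k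
      _ = p * b⁻¹ := by rw [Finset.sum_const, Finset.card_univ, Fintype.card_fin, nsmul_eq_mul]
      _ ≤ b * b⁻¹ := mul_le_mul_of_nonneg_right (le_max_left _ _) (inv_nonneg.2 hb0.le)
      _ = 1 := mul_inv_cancel₀ hb0.ne'
  have hcont : ContinuousOn g (Set.Icc t₁ b) := by
    apply continuousOn_finset_sum
    intro k _
    apply ContinuousOn.mul continuousOn_const
    apply ContinuousOn.inv₀
    · exact (continuous_pow _).continuousOn
    · intro x hx
      exact pow_ne_zero _ (ne_of_gt (lt_of_lt_of_le ht₁0 hx.1))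
  obtain ⟨r, hrmem, hgr⟩ : ∃ r ∈ Set.Icc t₁ b, g r = 1 := by
    have := intermediate_value_Icc' htb hcont
    have h1 : (1 : ℝ) ∈ Set.Icc (g b) (g t₁) := ⟨hg2, hg1⟩
    obtain ⟨r, hr, hgr⟩ := this h1
    exact ⟨r, hr, hgr⟩
  have hr0 : 0 < r := lt_of_lt_of_le ht₁0 hrmem.1
  refine ⟨r, hr0, ?_, ?_⟩
  · have := hkey r hr0
    rw [hgr, mul_one] at this
    exact this
  · intro t ht htle
    by_contra hc
    push_neg at hc
    have ht0 : 0 < t := hr0.trans hc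
    have hgt : g t < 1 := by rw [← hgr]; exact hanti r t hr0 hc
    have : t ^ p ≤ t ^ p * g t := by rw [hkey t ht0]; exact htle
    have h2 : (1 : ℝ) ≤ g t := by
      have hp0 : 0 < t ^ p := pow_pos ht0 _
      nlinarith
    linarith

end Aux

/-- with `Π = u vᵀ`, one has `e₁ᵀ Π e₁ = ρ(A)^{p−1} / φ′(ρ(A))`. -/
theorem e1_perron_projection_e1
    (p : ℕ) (hp : 0 < p) (α : Fin p → ℝ)
    (hα : ∀ i, α i ∈ Set.Icc (0 : ℝ) 1)
    (hαp : 0 < α ⟨p - 1, by omega⟩) :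
    (Matrix.vecMulVec (perronU p (specRad (companion p α)))
        (perronV p α (specRad (companion p α)))) ⟨0, hp⟩ ⟨0, hp⟩
      = specRad (companion p α) ^ (p - 1) /
        (phiPoly p α).derivative.eval (specRad (companion p α)) := by
  obtain ⟨r, hr0, hroot, hmax⟩ := exists_perron_root' p hp α hα hαp
  have hrne : r ≠ 0 := hr0.ne'
  -- specRad = r
  have hspecRad : specRad (companion p α) = r := by
    unfold specRad
    have hmem : r ∈ {s : ℝ | ∃ z ∈ spectrum ℂ ((companion p α).map (Complex.ofReal : ℝ → ℂ)),
        ‖z‖ = s} := by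
      refine ⟨(r : ℂ), ?_, by rw [Complex.norm_real, Real.norm_of_nonneg hr0.le]⟩
      rw [companion_spectrum' p hp α hαp]
      push_cast
      exact_mod_cast congrArg (Complex.ofReal : ℝ → ℂ) hroot
    have hub : ∀ s ∈ {s : ℝ | ∃ z ∈ spectrum ℂ ((companion p α).map (Complex.ofReal : ℝ → ℂ)),
        ‖z‖ = s}, s ≤ r := by
      rintro s ⟨z, hz, rfl⟩
      rw [companion_spectrum' p hp α hαp] at hz
      apply hmax _ (norm_nonneg z)
      calc ‖z‖ ^ p = ‖z ^ p‖ := (norm_pow _ _).symm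
        _ = ‖∑ k : Fin p, (α k : ℂ) * z ^ (p - 1 - (k : ℕ))‖ := by rw [hz]
        _ ≤ ∑ k : Fin p, ‖(α k : ℂ) * z ^ (p - 1 - (k : ℕ))‖ :=
            norm_sum_le _ _
        _ = ∑ k : Fin p, α k * ‖z‖ ^ (p - 1 - (k : ℕ)) := by
            refine Finset.sum_congr rfl fun k _ => ?_
            rw [norm_mul, norm_pow, Complex.norm_real, Real.norm_of_nonneg (hα k).1]
    exact le_antisymm (csSup_le ⟨r, hmem⟩ hub) (le_csSup ⟨r, hub⟩ hmem)
  rw [hspecRad]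
  -- notation
  set S : ℝ := ∑ k : Fin p, r ^ (-(k : ℤ)) with hS
  set D : ℝ := ∑ k : Fin p, ((k : ℕ) + 1 : ℝ) * α k * r ^ (-((k : ℕ) + 1 : ℤ)) with hD
  have hSpos : 0 < S := by
    rw [hS]
    apply Finset.sum_pos (fun k _ => zpow_pos hr0 _)
    exact ⟨⟨0, hp⟩, Finset.mem_univ _⟩
  -- key normalization: ∑ α_k r^{-(k+1)} = 1
  have hE : ∑ k : Fin p, α k * r ^ (-((k : ℕ) + 1 : ℤ)) = 1 := by
    have h2 : r ^ p * ∑ k : Fin p, α k * r ^ (-((k : ℕ) + 1 : ℤ)) = r ^ p := by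
      rw [Finset.mul_sum]
      calc ∑ k : Fin p, r ^ p * (α k * r ^ (-((k : ℕ) + 1 : ℤ)))
          = ∑ k : Fin p, α k * r ^ (p - 1 - (k : ℕ)) := by
            refine Finset.sum_congr rfl fun k _ => ?_
            have hk := k.isLt
            have hzz : (r : ℝ) ^ p * r ^ (-((k : ℕ) + 1 : ℤ)) = r ^ (p - 1 - (k : ℕ)) := by
              rw [← zpow_natCast r p, ← zpow_add₀ hrne, ← zpow_natCast r (p - 1 - (k : ℕ))]
              congr 1
              push_cast
              omega
            rw [← hzz]; ring
        _ = r ^ p := hroot.symm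
    nth_rewrite 2 [← mul_one (r ^ p)] at h2
    exact mul_left_cancel₀ (pow_ne_zero p hrne) h2
  have hDpos : 0 < D := by
    rw [hD]
    apply Finset.sum_pos'
    · intro k _
      have := (hα k).1
      positivity
    · refine ⟨⟨p - 1, by omega⟩, Finset.mem_univ _, ?_⟩
      have h1 : (0 : ℝ) < ((p - 1 : ℕ) : ℝ) + 1 := by positivity
      exact mul_pos (mul_pos h1 hαp) (zpow_pos hr0 _)
  -- the filtered sum is 1
  have hT : ∑ ℓ ∈ Finset.univ.filter (fun ℓ : Fin p => (⟨0, hp⟩ : Fin p) ≤ ℓ),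
      α ℓ * r ^ (((⟨0, hp⟩ : Fin p) : ℤ) - (ℓ : ℤ) - 1) = 1 := by
    rw [Finset.filter_true_of_mem (fun ℓ _ => Fin.mk_le_of_le_val (Nat.zero_le _))]
    rw [← hE]
    refine Finset.sum_congr rfl fun ℓ _ => ?_
    congr 1
    simp only [Fin.val_mk]
    push_cast
    ring_nf
  -- derivative evaluation
  have hder : (phiPoly p α).derivative.eval r =
      (p : ℝ) * r ^ (p - 1) -
        ∑ k : Fin p, α k * (((p - 1 - (k : ℕ) : ℕ) : ℝ) * r ^ (p - 1 - (k : ℕ) - 1)) := by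
    simp [phiPoly, derivative_sum, derivative_X_pow, eval_finset_sum, mul_assoc]
  have hφ' : (phiPoly p α).derivative.eval r = r ^ (p - 1) * D := by
    rw [hder, hD, Finset.mul_sum]
    have hterm : ∀ k : Fin p,
        r ^ (p - 1) * (((k : ℕ) + 1 : ℝ) * α k * r ^ (-((k : ℕ) + 1 : ℤ)))
          = (p : ℝ) * (α k * r ^ (-((k : ℕ) + 1 : ℤ))) * r ^ (p - 1)
            - α k * (((p - 1 - (k : ℕ) : ℕ) : ℝ) * r ^ (p - 1 - (k : ℕ) - 1)) := by
      intro k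
      have hk := k.isLt
      rcases Nat.lt_or_ge (k : ℕ) (p - 1) with hkl | hkg
      · have h1 : r ^ (-((k : ℕ) + 1 : ℤ)) * r ^ (p - 1) = r ^ (p - 1 - (k : ℕ) - 1) := by
          rw [← zpow_natCast r (p - 1), ← zpow_add₀ hrne,
            ← zpow_natCast r (p - 1 - (k : ℕ) - 1)]
          congr 1
          push_cast
          omega
        have h2 : ((p - 1 - (k : ℕ) : ℕ) : ℝ) = (p : ℝ) - ((k : ℕ) : ℝ) - 1 := by
          have hnat : p - 1 - (k : ℕ) = p - ((k : ℕ) + 1) := by omega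
          rw [hnat, Nat.cast_sub (by omega)]
          push_cast
          ring
        rw [h2, ← h1]
        ring
      · have h0 : p - 1 - (k : ℕ) = 0 := by omega
        have h2 : ((k : ℕ) : ℝ) + 1 = (p : ℝ) := by
          have : (k : ℕ) + 1 = p := by omega
          exact_mod_cast congrArg (Nat.cast : ℕ → ℝ) this
        rw [h0]
        simp only [Nat.cast_zero, zero_mul, mul_zero, sub_zero, h2]
        ring
    rw [Finset.sum_congr rfl fun k _ => hterm k, Finset.sum_sub_distrib]
    congr 1
    rw [← Finset.sum_mul, ← Finset.mul_sum, hE, mul_one]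
  -- final computation
  rw [Matrix.vecMulVec_apply]
  show perronU p r ⟨0, hp⟩ * perronV p α r ⟨0, hp⟩ = r ^ (p - 1) / (phiPoly p α).derivative.eval r
  rw [hφ']
  unfold perronU perronV
  rw [← hS, ← hD, hT, mul_one]
  have h00 : ((⟨0, hp⟩ : Fin p) : ℤ) = 0 := by simp
  rw [h00, neg_zero, zpow_zero]
  have hrp : (0 : ℝ) < r ^ (p - 1) := pow_pos hr0 _
  field_simp
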